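/- Let E be a Dedekind complete vector lattice, let (T_α) be a decreasing net of positive orthomorphisms of E, and let S be a nonempty subset of E. If T_α s order-converges to 0 in E for every s ∈ S, then T_α x order-converges to 0 in E for every x in the band B_S generated by S. -/

import Mathlib

variable (E : Type*) [AddCommGroup E] [ConditionallyCompleteLattice E] [Module ℝ E]
  [CovariantClass E E (· + ·) (· ≤ ·)] [PosSMulMono ℝ E]

/-- The order on order bounded operators: `A ≤ B` iff `A x ≤ B x` for all `x ≥ 0`. -/
def opLE (A B : E →ₗ[ℝ] E) : Prop := ∀ x : E, 0 ≤ x → A x ≤ B x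

/-- An operator is order bounded when it maps order bounded sets to order bounded sets. -/
def IsOrderBoundedOp (T : E →ₗ[ℝ] E) : Prop :=
  ∀ a b : E, ∃ c d : E, ∀ x : E, a ≤ x → x ≤ b → c ≤ T x ∧ T x ≤ d

/-- Band preserving: `T x` lies in the band generated by `x`; equivalently `T x ⊥ y`
whenever `x ⊥ y`. -/
def IsBandPreserving (T : E →ₗ[ℝ] E) : Prop :=
  ∀ x y : E, |x| ⊓ |y| = 0 → |T x| ⊓ |y| = 0

/-- An orthomorphism is an order bounded band preserving linear operator. -/
def IsOrthomorphism (T : E →ₗ[ℝ] E) : Prop :=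
  IsOrderBoundedOp E T ∧ IsBandPreserving E T

/-- Membership in the band generated by a set `S` (in an Archimedean vector lattice this is
the double disjoint complement of `S`). -/
def memBandGen (S : Set E) (w : E) : Prop :=
  ∀ u : E, (∀ s ∈ S, |u| ⊓ |s| = 0) → |u| ⊓ |w| = 0

/-- `P` is the band projection onto the band `B`: it maps into `B` and `x - P x` is
disjoint from `B` for every `x`. -/
def IsBandProjectionOnto (B : Set E) (P : E →ₗ[ℝ] E) : Prop :=
  (∀ x : E, P x ∈ B) ∧ (∀ x : E, ∀ b ∈ B, |x - P x| ⊓ |b| = 0)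

/-- Order convergence of a net: there is a downward directed set `D` with infimum `0`
such that the net is eventually dominated by every member of `D`. -/
def OrderConvNet {ι : Type*} [Preorder ι] (y : ι → E) (l : E) : Prop :=
  ∃ D : Set E, D.Nonempty ∧ DirectedOn (· ≥ ·) D ∧ IsGLB D 0 ∧
    ∀ d ∈ D, ∃ i₀ : ι, ∀ i : ι, i₀ ≤ i → |y i - l| ≤ d

/-- Unbounded order convergence of a net. -/
def UOConvNet {ι : Type*} [Preorder ι] (y : ι → E) (l : E) : Prop :=
  ∀ u : E, 0 ≤ u → OrderConvNet E (fun i => |y i - l| ⊓ u) 0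

/-- Order convergence of a net of operators, in the operator order of the order bounded
operators: there is a downward directed set `D` of operators whose infimum among the
order bounded operators is `0`, eventually dominating `|T i - L|`. -/
def OpOrderConvNet {ι : Type*} [Preorder ι] (T : ι → E →ₗ[ℝ] E) (L : E →ₗ[ℝ] E) : Prop :=
  ∃ D : Set (E →ₗ[ℝ] E), D.Nonempty ∧
    DirectedOn (fun A B => opLE E B A) D ∧
    (∀ d ∈ D, opLE E 0 d) ∧
    (∀ C : E →ₗ[ℝ] E, IsOrderBoundedOp E C → (∀ d ∈ D, opLE E C d) → opLE E C 0) ∧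
    ∀ d ∈ D, ∃ i₀ : ι, ∀ i : ι, i₀ ≤ i → opLE E (L - T i) d ∧ opLE E (T i - L) d



section Aux
set_option linter.unusedSectionVars false
variable {E}


lemma my_smul_inf (r : ℝ) (hr : 0 < r) (u v : E) : r • (u ⊓ v) = (r • u) ⊓ (r • v) := by
  apply le_antisymm
  · exact le_inf (smul_le_smul_of_nonneg_left inf_le_left hr.le)
      (smul_le_smul_of_nonneg_left inf_le_right hr.le)
  · have h : r⁻¹ • ((r • u) ⊓ (r • v)) ≤ u ⊓ v := by
      apply le_inf
      · have := smul_le_smul_of_nonneg_left (inf_le_left (a := r • u) (b := r • v))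
          (inv_nonneg.mpr hr.le)
        rwa [inv_smul_smul₀ hr.ne'] at this
      · have := smul_le_smul_of_nonneg_left (inf_le_right (a := r • u) (b := r • v))
          (inv_nonneg.mpr hr.le)
        rwa [inv_smul_smul₀ hr.ne'] at this
    calc (r • u) ⊓ (r • v) = r • (r⁻¹ • ((r • u) ⊓ (r • v))) := by rw [smul_inv_smul₀ hr.ne']
      _ ≤ r • (u ⊓ v) := smul_le_smul_of_nonneg_left h hr.le

lemma my_arch {w u : E} (h : ∀ n : ℕ, (n : ℝ) • w ≤ u) : w ≤ 0 := by
  have hne : (Set.range (fun n : ℕ => (n : ℝ) • w)).Nonempty := ⟨_, ⟨0, rfl⟩⟩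
  have hbdd : BddAbove (Set.range (fun n : ℕ => (n : ℝ) • w)) :=
    ⟨u, by rintro _ ⟨n, rfl⟩; exact h n⟩
  have hlub := isLUB_csSup hne hbdd
  set m := sSup (Set.range (fun n : ℕ => (n : ℝ) • w)) with hm
  have hub : ∀ n : ℕ, (n : ℝ) • w ≤ m - w := by
    intro n
    have h1 : ((n + 1 : ℕ) : ℝ) • w ≤ m := hlub.1 ⟨n + 1, rfl⟩
    have h2 : ((n + 1 : ℕ) : ℝ) • w = (n : ℝ) • w + w := by
      push_cast; rw [add_smul, one_smul]
    rw [h2] at h1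
    exact le_sub_iff_add_le.mpr h1
  have hle : m ≤ m - w := hlub.2 (by rintro _ ⟨n, rfl⟩; exact hub n)
  have h4 : m + w ≤ m := le_sub_iff_add_le.mp hle
  calc w = m + w - m := by abel
    _ ≤ m - m := sub_le_sub_right h4 m
    _ = 0 := by abel

lemma my_disjLe {b a w : E} (hw : 0 ≤ w) (hd : b ⊓ a = 0) (hle : b ≤ a + w) : b ≤ w := by
  have h1 : b - w ≤ a := sub_le_iff_le_add.mpr hle
  have h2 : b - w ≤ b := sub_le_self _ hw
  have h3 : b - w ≤ 0 := hd ▸ le_inf h2 h1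
  exact sub_nonpos.mp h3

lemma my_glb_smul_le {r : ℝ} (hr : 0 < r) {m : E} {A : Set E} (hA : IsGLB A 0)
    (h : ∀ a ∈ A, m ≤ r • a) : m ≤ 0 := by
  have h1 : r⁻¹ • m ≤ 0 := by
    apply hA.2
    intro a ha
    have := smul_le_smul_of_nonneg_left (h a ha) (inv_nonneg.mpr hr.le)
    rwa [inv_smul_smul₀ hr.ne'] at this
  have := smul_le_smul_of_nonneg_left h1 hr.le
  rwa [smul_inv_smul₀ hr.ne', smul_zero] at this

lemma my_posPart_sub (a c : E) : (a - c) ⊔ 0 = a - a ⊓ c := by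
  rw [sub_eq_add_neg a (a ⊓ c), neg_inf, add_sup, add_neg_cancel, sup_comm, sub_eq_add_neg]

lemma my_mono {T : E →ₗ[ℝ] E} (hT : ∀ v : E, 0 ≤ v → 0 ≤ T v) {a b : E} (h : a ≤ b) :
    T a ≤ T b := by
  have := hT (b - a) (sub_nonneg.mpr h)
  rw [map_sub] at this
  exact sub_nonneg.mp this

lemma my_ordCont {T : E →ₗ[ℝ] E} (hT : ∀ v : E, 0 ≤ v → 0 ≤ T v)
    (hbp : ∀ x y : E, |x| ⊓ |y| = 0 → |T x| ⊓ |y| = 0)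
    {κ : Type*} [Nonempty κ] (y : κ → E) (yb : E) (hy0 : ∀ α, 0 ≤ y α)
    (hyb : ∀ α, y α ≤ yb) (hglb : IsGLB (Set.range y) 0)
    {b : E} (hb0 : 0 ≤ b) (hb : ∀ α, b ≤ T (y α)) : b ≤ 0 := by
  have hyb0 : 0 ≤ yb := le_trans (hy0 (Classical.arbitrary κ)) (hyb _)
  set Y := T yb with hY
  have hY0 : 0 ≤ Y := hT yb hyb0
  -- Claim A : for k ≥ 1, ((k:ℝ)•b - Y)⁺ ⊓ yb = 0
  have claimA : ∀ k : ℕ, 0 < k → (((k : ℝ) • b - Y) ⊔ 0) ⊓ yb = 0 := by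
    intro k hk
    have hkR : (0 : ℝ) < (k : ℝ) := by exact_mod_cast hk
    set β := ((k : ℝ) • b - Y) ⊔ 0 with hβ
    have hβ0 : 0 ≤ β := le_sup_right
    have hdisj : ∀ α, β ⊓ ((yb - (k : ℝ) • y α) ⊔ 0) = 0 := by
      intro α
      set v := ((k : ℝ) • y α - yb) ⊔ 0 with hv
      set w := (yb - (k : ℝ) • y α) ⊔ 0 with hw
      have hv0 : 0 ≤ v := le_sup_right
      have hw0 : 0 ≤ w := le_sup_right
      have hvw : |v| ⊓ |w| = 0 := by
        rw [abs_of_nonneg hv0, abs_of_nonneg hw0]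
        have h1 : v = ((k : ℝ) • y α - yb)⁺ := by rw [posPart_def]
        have h2 : w = ((k : ℝ) • y α - yb)⁻ := by
          rw [negPart_def, neg_sub]
        rw [h1, h2]
        exact posPart_inf_negPart_eq_zero _
      have hTvw := hbp _ _ hvw
      have hTv0 : 0 ≤ T v := hT v hv0
      rw [abs_of_nonneg hTv0, abs_of_nonneg hw0] at hTvw
      have hβle : β ≤ T v := by
        have h1 : (k : ℝ) • b ≤ T ((k : ℝ) • y α) := by
          have := smul_le_smul_of_nonneg_left (hb α) hkR.le
          rwa [← map_smul] at this
        have hsplit : T ((k : ℝ) • y α) = T v + T (((k : ℝ) • y α) ⊓ yb) := by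
          rw [← map_add]
          congr 1
          rw [hv, my_posPart_sub]
          abel
        have h2 : T (((k : ℝ) • y α) ⊓ yb) ≤ Y := my_mono hT inf_le_right
        have h3 : (k : ℝ) • b ≤ T v + Y :=
          le_trans h1 (by rw [hsplit]; exact add_le_add_right h2 _)
        have h4 : (k : ℝ) • b - Y ≤ T v := sub_le_iff_le_add.mpr h3
        exact sup_le h4 hTv0
      have h5 : β ⊓ w ≤ 0 := hTvw ▸ inf_le_inf_right w hβle
      exact le_antisymm h5 (le_inf hβ0 hw0)
    have hm : ∀ α, β ⊓ yb ≤ (k : ℝ) • y α := by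
      intro α
      have hky0 : 0 ≤ (k : ℝ) • y α := smul_nonneg hkR.le (hy0 α)
      apply my_disjLe (a := (yb - (k : ℝ) • y α) ⊔ 0) hky0
      · refine le_antisymm ?_ (le_inf (le_inf hβ0 hyb0) le_sup_right)
        calc (β ⊓ yb) ⊓ ((yb - (k : ℝ) • y α) ⊔ 0) ≤ β ⊓ ((yb - (k : ℝ) • y α) ⊔ 0) :=
              inf_le_inf_right _ inf_le_left
          _ = 0 := hdisj α
      · calc β ⊓ yb ≤ yb := inf_le_right
          _ = (yb - (k : ℝ) • y α) + (k : ℝ) • y α := by abel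
          _ ≤ ((yb - (k : ℝ) • y α) ⊔ 0) + (k : ℝ) • y α := add_le_add_left le_sup_left _
    have h6 : β ⊓ yb ≤ 0 :=
      my_glb_smul_le hkR hglb (by rintro _ ⟨α, rfl⟩; exact hm α)
    exact le_antisymm h6 (le_inf hβ0 hyb0)
  -- Claim B : b ⊓ yb = 0
  have claimB : b ⊓ yb = 0 := by
    have hm' : ∀ k : ℕ, (k : ℝ) • (b ⊓ yb) ≤ Y := by
      intro k
      rcases Nat.eq_zero_or_pos k with rfl | hk
      · simpa using hY0
      have hkR : (0 : ℝ) < (k : ℝ) := by exact_mod_cast hk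
      set β := ((k : ℝ) • b - Y) ⊔ 0 with hβ
      have hβ0 : 0 ≤ β := le_sup_right
      have h0 : (b ⊓ yb) ⊓ β = 0 := by
        refine le_antisymm ?_ (le_inf (le_inf hb0 hyb0) hβ0)
        calc (b ⊓ yb) ⊓ β ≤ yb ⊓ β := inf_le_inf_right _ inf_le_right
          _ = β ⊓ yb := inf_comm _ _
          _ = 0 := claimA k hk
      have hββ : β ≤ (k : ℝ) • β := by
        have h1k : (1 : ℝ) ≤ (k : ℝ) := by exact_mod_cast hk
        have : 0 ≤ ((k : ℝ) - 1) • β := smul_nonneg (by linarith) hβ0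
        rw [sub_smul, one_smul] at this
        exact sub_nonneg.mp this
      have h1 : ((k : ℝ) • (b ⊓ yb)) ⊓ β = 0 := by
        refine le_antisymm ?_ (le_inf (smul_nonneg hkR.le (le_inf hb0 hyb0)) hβ0)
        calc ((k : ℝ) • (b ⊓ yb)) ⊓ β ≤ ((k : ℝ) • (b ⊓ yb)) ⊓ ((k : ℝ) • β) :=
              inf_le_inf_left _ hββ
          _ = (k : ℝ) • ((b ⊓ yb) ⊓ β) := (my_smul_inf _ hkR _ _).symm
          _ = 0 := by rw [h0, smul_zero]
      apply my_disjLe hY0 h1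
      calc (k : ℝ) • (b ⊓ yb) ≤ (k : ℝ) • b :=
            smul_le_smul_of_nonneg_left inf_le_left hkR.le
        _ = ((k : ℝ) • b - Y) + Y := by abel
        _ ≤ β + Y := add_le_add_left le_sup_left _
    have := my_arch hm'
    exact le_antisymm this (le_inf hb0 hyb0)
  -- conclude
  have hd : |yb| ⊓ |b| = 0 := by
    rw [abs_of_nonneg hyb0, abs_of_nonneg hb0, inf_comm]
    exact claimB
  have h7 := hbp yb b hd
  rw [abs_of_nonneg hY0, abs_of_nonneg hb0] at h7
  have hbY : b ≤ Y := le_trans (hb (Classical.arbitrary κ)) (my_mono hT (hyb _))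
  calc b = Y ⊓ b := (inf_eq_right.mpr hbY).symm
    _ = 0 := h7
    _ ≤ 0 := le_refl 0

end Aux


/-- if a decreasing net of positive orthomorphisms of a Dedekind complete
vector lattice converges in order to `0` on every element of a nonempty set `S`, then it
converges in order to `0` on every element of the band generated by `S`. -/


theorem stmt14
    {ι : Type*} [Preorder ι] [IsDirected ι (· ≤ ·)] [Nonempty ι]
    (T : ι → E →ₗ[ℝ] E)
    (horth : ∀ i, IsOrthomorphism E (T i))
    (hdec : ∀ i j : ι, i ≤ j → opLE E (T j) (T i))
    (hpos : ∀ i, opLE E 0 (T i))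
    (S : Set E) (hSne : S.Nonempty)
    (hS : ∀ s ∈ S, OrderConvNet E (fun i => T i s) 0) :
    ∀ x : E, memBandGen E S x → OrderConvNet E (fun i => T i x) 0 := by
  classical
  intro x hx
  have j0 : ι := Classical.arbitrary ι
  have hTpos : ∀ (i) (v : E), 0 ≤ v → 0 ≤ T i v := fun i v hv => by
    have := hpos i v hv
    rwa [LinearMap.zero_apply] at this
  set x' := |x| with hx'def
  have hx'0 : 0 ≤ x' := abs_nonneg x
  have habsT : ∀ i, |T i x| ≤ T i x' := by
    intro i
    have ha1 : T i x ≤ T i x' := my_mono (hTpos i) (le_abs_self x)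
    have ha2 : -(T i x) ≤ T i x' := by
      rw [← map_neg]
      exact my_mono (hTpos i) (neg_le_abs x)
    exact abs_le'.mpr ⟨ha1, ha2⟩
  -- Main claim: every lower bound of the net (T i x') is ≤ 0.
  have main : ∀ c : E, (∀ i, c ≤ T i x') → c ≤ 0 := by
    intro c hc
    set b := c ⊔ 0 with hbdef
    have hb0 : 0 ≤ b := le_sup_right
    have hble : ∀ i, b ≤ T i x' := fun i => sup_le (hc i) (hTpos i x' hx'0)
    suffices hb : b ≤ 0 by exact le_trans le_sup_left hb
    -- Step 1: b is disjoint from every element of S.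
    have step1 : ∀ s ∈ S, b ⊓ |s| = 0 := by
      intro s hs
      obtain ⟨D, hDne, hDdir, hDglb, hDev⟩ := hS s hs
      have habs : ∀ i, T i |s| = |T i s| := by
        intro i
        have hdisj1 : |s⁺| ⊓ |s⁻| = 0 := by
          rw [abs_of_nonneg (posPart_nonneg s), abs_of_nonneg (negPart_nonneg s)]
          exact posPart_inf_negPart_eq_zero s
        have h1 := (horth i).2 _ _ hdisj1
        have h1' : |s⁻| ⊓ |T i s⁺| = 0 := by rw [inf_comm]; exact h1
        have h2 := (horth i).2 _ _ h1'
        have hp0 : 0 ≤ T i s⁺ := hTpos i _ (posPart_nonneg s)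
        have hn0 : 0 ≤ T i s⁻ := hTpos i _ (negPart_nonneg s)
        rw [abs_of_nonneg hn0, abs_of_nonneg hp0] at h2
        have hinf : T i s⁺ ⊓ T i s⁻ = 0 := by rw [inf_comm]; exact h2
        have hsup : T i s⁺ ⊔ T i s⁻ = T i s⁺ + T i s⁻ := by
          have h3 := inf_add_sup (T i s⁺) (T i s⁻)
          rw [hinf, zero_add] at h3
          exact h3
        have e1 : T i |s| = T i s⁺ + T i s⁻ := by
          rw [← map_add, posPart_add_negPart]
        have e2 : T i s = T i s⁺ - T i s⁻ := by
          rw [← map_sub, posPart_sub_negPart]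
        have e3 : |T i s| = T i s⁺ ⊔ T i s⁻ := by
          rw [e2, ← sup_sub_inf_eq_abs_sub (T i s⁻) (T i s⁺), sup_comm, inf_comm, hinf,
            sub_zero]
        rw [e1, e3, hsup]
      -- tail lemma: anything eventually below r • T i |s| is ≤ 0
      have tail : ∀ (r : ℝ), 0 < r → ∀ (j : ι) (e : E),
          (∀ i, j ≤ i → e ≤ r • T i |s|) → e ≤ 0 := by
        intro r hr j e he
        have hlb : ∀ d ∈ D, r⁻¹ • e ≤ d := by
          intro d hd
          obtain ⟨i₀, hi₀⟩ := hDev d hd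
          obtain ⟨i, hji, hii⟩ := directed_of (· ≤ ·) j i₀
          have h1 : e ≤ r • T i |s| := he i hji
          have h2 : T i |s| ≤ d := by
            have h5 := hi₀ i hii
            simp only [sub_zero] at h5
            rw [habs i]
            exact h5
          have h3 : r⁻¹ • e ≤ T i |s| := by
            have h6 := smul_le_smul_of_nonneg_left h1 (inv_nonneg.mpr hr.le)
            rwa [inv_smul_smul₀ hr.ne'] at h6
          exact le_trans h3 h2
        have h4 : r⁻¹ • e ≤ 0 := hDglb.2 hlb
        have h7 := smul_le_smul_of_nonneg_left h4 hr.le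
        rwa [smul_inv_smul₀ hr.ne', smul_zero] at h7
      -- truncations
      set xn : ℕ → E := fun n => (x' - ((n : ℝ) + 1) • |s|) ⊔ 0 with hxndef
      have hxn0 : ∀ n, 0 ≤ xn n := fun n => le_sup_right
      have hble2 : ∀ (n : ℕ) (j : ι), b ≤ T j (xn n) := by
        intro n j
        have key : ∀ i, j ≤ i → b - T j (xn n) ≤ ((n : ℝ) + 1) • T i |s| := by
          intro i hji
          have hsplit : T i x' = T i (x' ⊓ (((n : ℝ) + 1) • |s|)) + T i (xn n) := by
            rw [← map_add]
            congr 1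
            simp only [hxndef]
            rw [my_posPart_sub]
            abel
          have h1 : T i (x' ⊓ (((n : ℝ) + 1) • |s|)) ≤ ((n : ℝ) + 1) • T i |s| := by
            have h5 := my_mono (hTpos i)
              (inf_le_right : x' ⊓ (((n : ℝ) + 1) • |s|) ≤ ((n : ℝ) + 1) • |s|)
            rwa [map_smul] at h5
          have h2 : T i (xn n) ≤ T j (xn n) := hdec j i hji _ (hxn0 n)
          have h3 : b ≤ ((n : ℝ) + 1) • T i |s| + T i (xn n) :=
            le_trans (hble i) (by rw [hsplit]; exact add_le_add_left h1 _)
          have h4 : b - T i (xn n) ≤ ((n : ℝ) + 1) • T i |s| := sub_le_iff_le_add.mpr h3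
          calc b - T j (xn n) ≤ b - T i (xn n) := sub_le_sub_left h2 b
            _ ≤ _ := h4
        have h8 := tail _ (by positivity) j _ key
        exact sub_nonpos.mp h8
      -- the infimum z of the truncations
      have hAne : (Set.range xn).Nonempty := ⟨_, ⟨0, rfl⟩⟩
      have hAbdd : BddBelow (Set.range xn) := ⟨0, by rintro _ ⟨n, rfl⟩; exact hxn0 n⟩
      set z := sInf (Set.range xn) with hzdef
      have hzglb : IsGLB (Set.range xn) z := isGLB_csInf hAne hAbdd
      have hzle : ∀ n, z ≤ xn n := fun n => hzglb.1 ⟨n, rfl⟩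
      have hz0 : 0 ≤ z := hzglb.2 (by rintro _ ⟨n, rfl⟩; exact hxn0 n)
      have hxnle : ∀ n, xn n ≤ x' := by
        intro n
        simp only [hxndef]
        exact sup_le (sub_le_self _ (smul_nonneg (by positivity) (abs_nonneg s))) hx'0
      -- z is disjoint from s
      have hw : z ⊓ |s| = 0 := by
        set w := z ⊓ |s| with hwdef
        have hw0 : 0 ≤ w := le_inf hz0 (abs_nonneg s)
        have hws : w ≤ |s| := inf_le_right
        have hind : ∀ n : ℕ, ((n : ℝ) + 1) • w ≤ x' := by
          intro n
          induction n with
          | zero =>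
            have h1 : w ≤ x' := le_trans inf_le_left (le_trans (hzle 0) (hxnle 0))
            simpa using h1
          | succ n ih =>
            have h1 : w ≤ xn (n + 1) := le_trans inf_le_left (hzle (n + 1))
            have h2 : xn (n + 1) = x' - x' ⊓ (((n + 1 : ℕ) : ℝ) + 1) • |s| := by
              simp only [hxndef]
              rw [my_posPart_sub]
            have h3 : ((n : ℝ) + 1) • w ≤ x' ⊓ (((n + 1 : ℕ) : ℝ) + 1) • |s| := by
              refine le_inf ih ?_
              have ha : ((n : ℝ) + 1) • w ≤ ((n : ℝ) + 1) • |s| :=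
                smul_le_smul_of_nonneg_left hws (by positivity)
              have hb2 : ((n : ℝ) + 1) • |s| ≤ (((n + 1 : ℕ) : ℝ) + 1) • |s| := by
                have h6 : 0 ≤ ((((n + 1 : ℕ) : ℝ) + 1) - ((n : ℝ) + 1)) • |s| :=
                  smul_nonneg (by push_cast; linarith) (abs_nonneg s)
                rw [sub_smul] at h6
                exact sub_nonneg.mp h6
              exact le_trans ha hb2
            have h4 : w ≤ x' - ((n : ℝ) + 1) • w := by
              rw [h2] at h1
              exact le_trans h1 (sub_le_sub_left h3 x')
            have h5 : w + ((n : ℝ) + 1) • w ≤ x' := le_sub_iff_add_le.mp h4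
            have h6 : (((n + 1 : ℕ) : ℝ) + 1) • w = w + ((n : ℝ) + 1) • w := by
              have : (((n + 1 : ℕ) : ℝ) + 1) = 1 + ((n : ℝ) + 1) := by push_cast; ring
              rw [this, add_smul, one_smul]
            rw [h6]
            exact h5
        have harch : w ≤ 0 := by
          apply my_arch (u := x')
          intro n
          refine le_trans ?_ (hind n)
          rw [add_smul, one_smul]
          exact le_add_of_nonneg_right hw0
        exact le_antisymm harch hw0
      -- b' := b ⊓ |s|
      set b' := b ⊓ |s| with hb'def
      have hb'0 : 0 ≤ b' := le_inf hb0 (abs_nonneg s)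
      have hzb' : |z| ⊓ |b'| = 0 := by
        rw [abs_of_nonneg hz0, abs_of_nonneg hb'0]
        refine le_antisymm ?_ (le_inf hz0 hb'0)
        calc z ⊓ b' ≤ z ⊓ |s| := inf_le_inf_left z inf_le_right
          _ = 0 := hw
      have hTz := (horth j0).2 z b' hzb'
      have hTz0 : 0 ≤ T j0 z := hTpos j0 z hz0
      rw [abs_of_nonneg hTz0, abs_of_nonneg hb'0] at hTz
      have hb'le : ∀ n : ℕ, b' ≤ T j0 (xn n - z) := by
        intro n
        apply my_disjLe (a := T j0 z) (hTpos j0 _ (sub_nonneg.mpr (hzle n)))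
        · rw [inf_comm]
          exact hTz
        · have h9 : T j0 z + T j0 (xn n - z) = T j0 (xn n) := by
            rw [← map_add]
            congr 1
            abel
          rw [h9]
          exact le_trans inf_le_left (hble2 n j0)
      have hglb0 : IsGLB (Set.range (fun n : ℕ => xn n - z)) 0 := by
        constructor
        · rintro _ ⟨n, rfl⟩
          exact sub_nonneg.mpr (hzle n)
        · intro e he
          have h10 : ∀ n, e + z ≤ xn n := fun n => le_sub_iff_add_le.mp (he ⟨n, rfl⟩)
          have h7 : e + z ≤ z := hzglb.2 (by rintro _ ⟨n, rfl⟩; exact h10 n)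
          calc e = e + z - z := by abel
            _ ≤ z - z := sub_le_sub_right h7 z
            _ = 0 := by abel
      have hb'le0 : b' ≤ 0 :=
        my_ordCont (hTpos j0) ((horth j0).2) (fun n : ℕ => xn n - z) x'
          (fun n => sub_nonneg.mpr (hzle n))
          (fun n => le_trans (sub_le_self _ hz0) (hxnle n)) hglb0 hb'0 hb'le
      exact le_antisymm hb'le0 hb'0
    -- Step 2: conclude b = 0 from band membership of x
    have hbx : |b| ⊓ |x| = 0 := hx b (fun s hs => by
      rw [abs_of_nonneg hb0]; exact step1 s hs)
    have hx'b : |x'| ⊓ |b| = 0 := by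
      rw [hx'def, abs_abs, inf_comm]
      exact hbx
    have h8 := (horth j0).2 x' b hx'b
    have hT0 : 0 ≤ T j0 x' := hTpos j0 x' hx'0
    rw [abs_of_nonneg hT0, abs_of_nonneg hb0] at h8
    calc b = T j0 x' ⊓ b := (inf_eq_right.mpr (hble j0)).symm
      _ = 0 := h8
      _ ≤ 0 := le_rfl
  -- assemble the order convergence witness
  refine ⟨Set.range (fun i => T i x'), ⟨_, ⟨j0, rfl⟩⟩, ?_, ⟨?_, ?_⟩, ?_⟩
  · rintro _ ⟨i, rfl⟩ _ ⟨j, rfl⟩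
    obtain ⟨k, hik, hjk⟩ := directed_of (· ≤ ·) i j
    exact ⟨T k x', ⟨k, rfl⟩, hdec i k hik x' hx'0, hdec j k hjk x' hx'0⟩
  · rintro _ ⟨i, rfl⟩
    exact hTpos i x' hx'0
  · intro c hc
    exact main c (fun i => hc ⟨i, rfl⟩)
  · rintro _ ⟨i₀, rfl⟩
    refine ⟨i₀, fun i hi => ?_⟩
    simp only [sub_zero]
    exact le_trans (habsT i) (hdec i₀ i hi x' hx'0)
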